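/- Let α ∈ ℂ and let φ, ψ : ℂ → ℂ be entire functions with ψ nowhere vanishing, satisfying ψ''(x) = (2x − 2ψ(x)φ(x))·ψ(x), φ''(x) = (2x − 2ψ(x)φ(x))·φ(x), and φ'(x)ψ(x) − φ(x)ψ'(x) = 2α for all x ∈ ℂ. Define b_n by b₀ = ψ, b_n = b_{n-1}' + φ·(∑_{i+j=n-2, i,j≥0} b_i b_j), and the Hankel determinants τ_{-N} = det(b_{i+j})_{0≤i,j≤N-1} for N ≥ 1 (τ₀ = 1); assume τ_m is nowhere vanishing for every m < 0. Define d_n by d₀ = −ψ, d₁ = ψ', d₂ = (ψ''ψ − (ψ')² + φψ³)/ψ, d_n = d_{n-1}' + (1/ψ)·∑_{k=2}^{n-2} d_k d_{n-k} for n ≥ 3, and set κ₋₁ = 1 and κ_{-n-1} = det(d_{i+j})_{1≤i,j≤n} for n ≥ 1. Then for every n ≤ −1 and all x ∈ ℂ: κ_n(x) = τ_n(x)/ψ(x). -/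

import Mathlib

open Finset

private lemma PII_conv (φ ψ : ℂ → ℂ) (hφ : Differentiable ℂ φ) (hψ : Differentiable ℂ ψ)
    (hψ0 : ∀ x : ℂ, ψ x ≠ 0)
    (b d : ℕ → ℂ → ℂ)
    (hb0 : b 0 = ψ)
    (hb : ∀ n : ℕ, b (n + 1) =
      deriv (b n) + fun x => φ x * ∑ k ∈ Finset.range n, b k x * b (n - 1 - k) x)
    (hd0 : d 0 = fun x => -ψ x) (hd1 : d 1 = deriv ψ)
    (hd2 : d 2 = fun x =>
      (deriv (deriv ψ) x * ψ x - (deriv ψ x) ^ 2 + φ x * (ψ x) ^ 3) / ψ x)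
    (hd : ∀ n : ℕ, d (n + 3) = deriv (d (n + 2)) + fun x =>
      (1 / ψ x) * ∑ k ∈ Finset.Icc 2 (n + 1), d k x * d (n + 3 - k) x) :
    ∀ n : ℕ, ∀ x : ℂ, ∑ k ∈ range (n + 1), b k x * d (n - k) x
      = if n = 0 then -(ψ x) ^ 2 else 0 := by
  have hderiv : ∀ f : ℂ → ℂ, Differentiable ℂ f → Differentiable ℂ (deriv f) := fun f hf =>
    ((contDiff_infty_iff_deriv.mp hf.contDiff).2).differentiable (by simp)
  have hbD : ∀ n, Differentiable ℂ (b n) := by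
    intro n
    induction n using Nat.strong_induction_on with
    | _ n IH =>
      match n with
      | 0 => rw [hb0]; exact hψ
      | (n+1) =>
        rw [hb n]
        refine (hderiv _ (IH n (by omega))).add (hφ.mul (Differentiable.fun_sum fun i hi => ?_))
        simp only [mem_range] at hi
        exact (IH i (by omega)).mul (IH (n-1-i) (by omega))
  have hdD : ∀ n, Differentiable ℂ (d n) := by
    intro n
    induction n using Nat.strong_induction_on with
    | _ n IH =>
      match n with
      | 0 => rw [hd0]; exact hψ.neg
      | 1 => rw [hd1]; exact hderiv _ hψ
      | 2 =>
        rw [hd2]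
        exact ((((hderiv _ (hderiv _ hψ)).mul hψ).sub
            ((hderiv _ hψ).pow 2)).add (hφ.mul (hψ.pow 3))).div hψ hψ0
      | (n+3) =>
        rw [hd n]
        refine (hderiv _ (IH (n+2) (by omega))).add
          (Differentiable.mul ((differentiable_const 1).div hψ hψ0)
            (Differentiable.fun_sum fun i hi => ?_))
        simp only [mem_Icc] at hi
        exact (IH i (by omega)).mul (IH (n+3-i) (by omega))
  have hb1 : b 1 = deriv ψ := by
    rw [hb 0]; funext y; simp [hb0]
  have hb2 : ∀ x : ℂ, b 2 x = deriv (deriv ψ) x + φ x * (ψ x) ^ 2 := by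
    intro x
    rw [hb 1]
    simp only [Pi.add_apply, Finset.sum_range_one, Nat.sub_self, Nat.zero_sub, Nat.sub_zero, hb1, hb0]
    ring
  have Db : ∀ (n : ℕ) (x : ℂ), deriv (b n) x
      = b (n+1) x - φ x * ∑ k ∈ range n, b k x * b (n - 1 - k) x := by
    intro n x
    rw [hb n]
    simp
  have Dd : ∀ (n : ℕ) (x : ℂ), deriv (d (n+2)) x
      = d (n+3) x - (1 / ψ x) * ∑ k ∈ Finset.Icc 2 (n+1), d k x * d (n + 3 - k) x := by
    intro n x
    rw [hd n]
    simp
  have Dd0 : ∀ x : ℂ, deriv (d 0) x = -deriv ψ x := by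
    intro x
    rw [hd0]
    exact deriv.neg
  have Dd1 : ∀ x : ℂ, deriv (d 1) x = deriv (deriv ψ) x := by
    intro x; rw [hd1]
  intro n
  induction n using Nat.strong_induction_on with
  | _ n IH =>
    match n with
    | 0 => intro x; simp [hb0, hd0]; ring
    | 1 =>
      intro x
      simp [Finset.sum_range_succ, hb0, hb1, hd0, hd1]
      ring
    | 2 =>
      intro x
      rw [if_neg (by omega)]
      simp only [Finset.sum_range_succ, Finset.sum_range_zero]
      norm_num
      simp only [hb0, hb1, hb2, hd0, hd1, hd2]
      field_simp [hψ0 x]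
      ring
    | (p+3) =>
      intro x
      rw [if_neg (by omega)]
      have hIH : ∀ m, m < p + 3 → ∀ y : ℂ,
          ∑ k ∈ range (m + 1), b k y * d (m - k) y = if m = 0 then -(ψ y) ^ 2 else 0 := IH
      show (∑ k ∈ range (p + 4), b k x * d (p + 3 - k) x) = 0
      set c : ℂ := ∑ k ∈ range (p + 4), b k x * d (p + 3 - k) x with hc
      have hfun : (fun y => ∑ k ∈ range (p + 3), b k y * d (p + 2 - k) y)
          = fun _ => (0 : ℂ) := by
        funext y
        have h := hIH (p + 2) (by omega) y
        rw [show p + 2 + 1 = p + 3 from rfl, if_neg (by omega)] at h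
        exact h
      have hder0 : deriv (fun y => ∑ k ∈ range (p + 3), b k y * d (p + 2 - k) y) x = 0 := by
        rw [hfun]; exact deriv_const x 0
      have hder : deriv (fun y => ∑ k ∈ range (p + 3), b k y * d (p + 2 - k) y) x
          = ∑ k ∈ range (p + 3),
              (deriv (b k) x * d (p + 2 - k) x + b k x * deriv (d (p + 2 - k)) x) := by
        refine HasDerivAt.deriv (HasDerivAt.fun_sum fun k _ => HasDerivAt.mul ?_ ?_)
        · exact ((hbD k).differentiableAt).hasDerivAt
        · exact ((hdD (p + 2 - k)).differentiableAt).hasDerivAt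
      have hS1a : ∑ k ∈ range (p + 3), b (k + 1) x * d (p + 2 - k) x
          = c - ψ x * d (p + 3) x := by
        have e1 := Finset.sum_range_succ' (fun k => b k x * d (p + 3 - k) x) (p + 3)
        rw [show p + 3 + 1 = p + 4 from rfl] at e1
        simp only [Nat.sub_zero, hb0] at e1
        have e2 : ∀ k ∈ range (p + 3),
            b (k + 1) x * d (p + 3 - (k + 1)) x = b (k + 1) x * d (p + 2 - k) x := by
          intro k hk
          rw [show p + 3 - (k + 1) = p + 2 - k from by omega]
        rw [Finset.sum_congr rfl e2] at e1
        rw [hc]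
        linear_combination -e1
      have hU : ∑ k ∈ range (p + 3), (∑ q ∈ range k, b q x * b (k - 1 - q) x) * d (p + 2 - k) x
          = b (p + 1) x * -(ψ x) ^ 2 := by
        have e := Finset.sum_range_succ'
          (fun k => (∑ q ∈ range k, b q x * b (k - 1 - q) x) * d (p + 2 - k) x) (p + 2)
        rw [show p + 2 + 1 = p + 3 from rfl] at e
        simp only [Finset.sum_range_zero, zero_mul, add_zero] at e
        have e2 : ∀ k ∈ range (p + 2),
            (∑ q ∈ range (k + 1), b q x * b (k + 1 - 1 - q) x) * d (p + 2 - (k + 1)) x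
            = ∑ q ∈ range (k + 1), b q x * b (k - q) x * d (p + 1 - q - (k - q)) x := by
          intro k hk
          simp only [mem_range] at hk
          rw [Finset.sum_mul]
          refine Finset.sum_congr rfl fun q hq => ?_
          simp only [mem_range] at hq
          rw [show k + 1 - 1 - q = k - q from by omega,
            show p + 2 - (k + 1) = p + 1 - q - (k - q) from by omega]
        rw [Finset.sum_congr rfl e2,
          Finset.sum_range_diag_flip (p + 2) (fun a c => b a x * b c x * d (p + 1 - a - c) x)] at e
        have e3 : ∀ a ∈ range (p + 2),
            (∑ cc ∈ range (p + 2 - a), b a x * b cc x * d (p + 1 - a - cc) x)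
            = if a = p + 1 then b a x * -(ψ x) ^ 2 else 0 := by
          intro a ha
          simp only [mem_range] at ha
          rw [show p + 2 - a = (p + 1 - a) + 1 from by omega]
          have e4 : ∀ cc ∈ range ((p + 1 - a) + 1),
              b a x * b cc x * d (p + 1 - a - cc) x
              = b a x * (b cc x * d (p + 1 - a - cc) x) := by
            intro cc _; ring
          rw [Finset.sum_congr rfl e4, ← Finset.mul_sum, hIH (p + 1 - a) (by omega) x]
          by_cases hap : a = p + 1
          · rw [if_pos (by omega), if_pos hap]
          · rw [if_neg (by omega), if_neg hap, mul_zero]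
        rw [Finset.sum_congr rfl e3,
          Finset.sum_ite_eq' (range (p + 2)) (p + 1) (fun a => b a x * -(ψ x) ^ 2),
          if_pos (by simp)] at e
        exact e
      have hS2a : ∑ k ∈ range (p + 1), b k x * d (p - k + 3) x
          = c - b (p + 1) x * d 2 x - b (p + 2) x * deriv ψ x + b (p + 3) x * ψ x := by
        have t3 := Finset.sum_range_succ (fun k => b k x * d (p + 3 - k) x) (p + 3)
        have t2 := Finset.sum_range_succ (fun k => b k x * d (p + 3 - k) x) (p + 2)
        have t1 := Finset.sum_range_succ (fun k => b k x * d (p + 3 - k) x) (p + 1)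
        rw [show p + 3 + 1 = p + 4 from rfl, show p + 3 - (p + 3) = 0 from by omega] at t3
        rw [show p + 2 + 1 = p + 3 from rfl, show p + 3 - (p + 2) = 1 from by omega] at t2
        rw [show p + 1 + 1 = p + 2 from rfl, show p + 3 - (p + 1) = 2 from by omega] at t1
        simp only [hd0, hd1] at t3 t2
        have e0 : ∑ k ∈ range (p + 1), b k x * d (p - k + 3) x
            = ∑ k ∈ range (p + 1), b k x * d (p + 3 - k) x := by
          refine Finset.sum_congr rfl fun k hk => ?_
          simp only [mem_range] at hk
          rw [show p - k + 3 = p + 3 - k from by omega]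
        rw [e0, hc]
        linear_combination -t3 - t2 - t1
      have hV : ∑ k ∈ range (p + 1),
            b k x * ∑ j ∈ Finset.Icc 2 (p - k + 1), d j x * d (p - k + 3 - j) x
          = ψ x * (c - ψ x * d (p + 3) x - deriv ψ x * d (p + 2) x
              - deriv ψ x * b (p + 2) x + ψ x * b (p + 3) x)
            - deriv ψ x * (ψ x * b (p + 2) x - deriv ψ x * b (p + 1) x - ψ x * d (p + 2) x) := by
        have s1 : ∀ k ∈ range (p + 1),
            b k x * ∑ j ∈ Finset.Icc 2 (p - k + 1), d j x * d (p - k + 3 - j) x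
            = ∑ t ∈ range (p - k), b k x * d (t + 2) x * d (p + 1 - k - t) x := by
          intro k hk
          simp only [mem_range] at hk
          rw [← Finset.Ico_add_one_right_eq_Icc, Finset.sum_Ico_eq_sum_range,
            show p - k + 1 + 1 - 2 = p - k from by omega, Finset.mul_sum]
          refine Finset.sum_congr rfl fun t ht => ?_
          simp only [mem_range] at ht
          rw [show p - k + 3 - (2 + t) = p + 1 - k - t from by omega,
            show (2 : ℕ) + t = t + 2 from by omega]
          ring
        rw [Finset.sum_congr rfl s1]
        have s2 := Finset.sum_range_succ
          (fun k => ∑ t ∈ range (p - k), b k x * d (t + 2) x * d (p + 1 - k - t) x) p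
        rw [s2, show p - p = 0 from by omega, Finset.sum_range_zero, add_zero,
          ← Finset.sum_range_diag_flip p (fun a t => b a x * d (t + 2) x * d (p + 1 - a - t) x)]
        have s3 : ∀ m ∈ range p,
            ∑ q ∈ range (m + 1), b q x * d (m - q + 2) x * d (p + 1 - q - (m - q)) x
            = (ψ x * b (m + 2) x - deriv ψ x * b (m + 1) x) * d (p + 1 - m) x := by
          intro m hm
          simp only [mem_range] at hm
          have s4 : ∀ q ∈ range (m + 1),
              b q x * d (m - q + 2) x * d (p + 1 - q - (m - q)) x
              = b q x * d (m + 2 - q) x * d (p + 1 - m) x := by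
            intro q hq
            simp only [mem_range] at hq
            rw [show m - q + 2 = m + 2 - q from by omega,
              show p + 1 - q - (m - q) = p + 1 - m from by omega]
          rw [Finset.sum_congr rfl s4, ← Finset.sum_mul]
          congr 1
          have u0 := hIH (m + 2) (by omega) x
          rw [show m + 2 + 1 = m + 3 from rfl, if_neg (by omega)] at u0
          have u2 := Finset.sum_range_succ (fun q => b q x * d (m + 2 - q) x) (m + 2)
          have u1 := Finset.sum_range_succ (fun q => b q x * d (m + 2 - q) x) (m + 1)
          rw [show m + 2 + 1 = m + 3 from rfl, show m + 2 - (m + 2) = 0 from by omega] at u2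
          rw [show m + 1 + 1 = m + 2 from rfl, show m + 2 - (m + 1) = 1 from by omega] at u1
          simp only [hd0, hd1] at u2 u1
          linear_combination u0 - u2 - u1
        rw [Finset.sum_congr rfl s3]
        have sexp : ∀ m ∈ range p,
            (ψ x * b (m + 2) x - deriv ψ x * b (m + 1) x) * d (p + 1 - m) x
            = ψ x * (b (m + 2) x * d (p + 1 - m) x)
              - deriv ψ x * (b (m + 1) x * d (p + 1 - m) x) := by
          intro m _; ring
        rw [Finset.sum_congr rfl sexp, Finset.sum_sub_distrib, ← Finset.mul_sum, ← Finset.mul_sum]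
        have a1 : ∑ m ∈ range p, b (m + 2) x * d (p + 1 - m) x
            = c - ψ x * d (p + 3) x - deriv ψ x * d (p + 2) x
              - deriv ψ x * b (p + 2) x + ψ x * b (p + 3) x := by
          have v3 := Finset.sum_range_succ (fun k => b k x * d (p + 3 - k) x) (p + 3)
          have v2 := Finset.sum_range_succ (fun k => b k x * d (p + 3 - k) x) (p + 2)
          have w1 := Finset.sum_range_succ' (fun k => b k x * d (p + 3 - k) x) (p + 1)
          have w2 := Finset.sum_range_succ' (fun k => b (k + 1) x * d (p + 3 - (k + 1)) x) p
          rw [show p + 3 + 1 = p + 4 from rfl, show p + 3 - (p + 3) = 0 from by omega] at v3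
          rw [show p + 2 + 1 = p + 3 from rfl, show p + 3 - (p + 2) = 1 from by omega] at v2
          rw [show p + 1 + 1 = p + 2 from rfl] at w1
          rw [show (0 : ℕ) + 1 = 1 from rfl, show p + 3 - 1 = p + 2 from by omega] at w2
          have w2' : ∀ k ∈ range p,
              b (k + 1 + 1) x * d (p + 3 - (k + 1 + 1)) x
              = b (k + 2) x * d (p + 1 - k) x := by
            intro k hk
            simp only [mem_range] at hk
            rw [show k + 1 + 1 = k + 2 from rfl, show p + 3 - (k + 2) = p + 1 - k from by omega]
          rw [Finset.sum_congr rfl w2'] at w2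
          simp only [Nat.sub_zero, hd0, hd1, hb0, hb1] at v3 v2 w1 w2
          rw [hc]
          linear_combination -v3 - v2 - w1 - w2
        have a2 : ∑ m ∈ range p, b (m + 1) x * d (p + 1 - m) x
            = ψ x * b (p + 2) x - deriv ψ x * b (p + 1) x - ψ x * d (p + 2) x := by
          have u0 := hIH (p + 2) (by omega) x
          rw [show p + 2 + 1 = p + 3 from rfl, if_neg (by omega)] at u0
          have v2 := Finset.sum_range_succ (fun k => b k x * d (p + 2 - k) x) (p + 2)
          have w1 := Finset.sum_range_succ' (fun k => b k x * d (p + 2 - k) x) (p + 1)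
          have w0 := Finset.sum_range_succ (fun k => b (k + 1) x * d (p + 2 - (k + 1)) x) p
          rw [show p + 2 + 1 = p + 3 from rfl, show p + 2 - (p + 2) = 0 from by omega] at v2
          rw [show p + 1 + 1 = p + 2 from rfl] at w1
          rw [show p + 2 - (p + 1) = 1 from by omega] at w0
          have w0' : ∀ k ∈ range p,
              b (k + 1) x * d (p + 2 - (k + 1)) x = b (k + 1) x * d (p + 1 - k) x := by
            intro k hk
            simp only [mem_range] at hk
            rw [show p + 2 - (k + 1) = p + 1 - k from by omega]
          rw [Finset.sum_congr rfl w0'] at w0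
          simp only [Nat.sub_zero, hd0, hd1, hb0, hb1] at u0 v2 w1 w0
          linear_combination u0 - v2 - w1 - w0
        rw [a1, a2]
      have k1 : ∑ k ∈ range (p + 3), deriv (b k) x * d (p + 2 - k) x
          = (∑ k ∈ range (p + 3), b (k + 1) x * d (p + 2 - k) x)
            - φ x * ∑ k ∈ range (p + 3),
                (∑ q ∈ range k, b q x * b (k - 1 - q) x) * d (p + 2 - k) x := by
        rw [Finset.mul_sum, ← Finset.sum_sub_distrib]
        refine Finset.sum_congr rfl fun k hk => ?_
        rw [Db k x]
        ring
      have k2 : ∑ k ∈ range (p + 3), b k x * deriv (d (p + 2 - k)) x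
          = (∑ k ∈ range (p + 1), b k x * d (p - k + 3) x)
            - (1 / ψ x) * (∑ k ∈ range (p + 1),
                b k x * ∑ j ∈ Finset.Icc 2 (p - k + 1), d j x * d (p - k + 3 - j) x)
            + b (p + 1) x * deriv (deriv ψ) x - b (p + 2) x * deriv ψ x := by
        have q2 := Finset.sum_range_succ (fun k => b k x * deriv (d (p + 2 - k)) x) (p + 2)
        have q1 := Finset.sum_range_succ (fun k => b k x * deriv (d (p + 2 - k)) x) (p + 1)
        rw [show p + 2 + 1 = p + 3 from rfl, show p + 2 - (p + 2) = 0 from by omega] at q2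
        rw [show p + 1 + 1 = p + 2 from rfl, show p + 2 - (p + 1) = 1 from by omega] at q1
        rw [q2, q1, Dd0 x, Dd1 x]
        have q0 : ∀ k ∈ range (p + 1), b k x * deriv (d (p + 2 - k)) x
            = b k x * d (p - k + 3) x
              - (1 / ψ x)
                * (b k x * ∑ j ∈ Finset.Icc 2 (p - k + 1), d j x * d (p - k + 3 - j) x) := by
          intro k hk
          simp only [mem_range] at hk
          rw [show p + 2 - k = (p - k) + 2 from by omega, Dd (p - k) x]
          rw [show p - k + 3 = p + 3 - k from by omega] at *
          ring
        rw [Finset.sum_congr rfl q0, Finset.sum_sub_distrib, ← Finset.mul_sum]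
        ring
      have hzero : ∑ k ∈ range (p + 3),
          (deriv (b k) x * d (p + 2 - k) x + b k x * deriv (d (p + 2 - k)) x) = 0 := by
        rw [← hder]; exact hder0
      rw [Finset.sum_add_distrib, k1, k2, hS1a, hU, hS2a, hV] at hzero
      simp only [hd2] at hzero
      have hψx := hψ0 x
      field_simp [hψx] at hzero
      have hcc : c * ψ x = 0 := by linear_combination hzero
      exact (mul_eq_zero.mp hcc).resolve_right hψx

open Finset in
private lemma PII_T (ψ : ℂ → ℂ) (b d : ℕ → ℂ → ℂ)
    (conv : ∀ n : ℕ, ∀ x : ℂ, ∑ k ∈ range (n + 1), b k x * d (n - k) x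
      = if n = 0 then -(ψ x) ^ 2 else 0) :
    ∀ i j : ℕ, ∀ x : ℂ,
      ∑ p ∈ range (i + 1), ∑ q ∈ range (j + 1), b p x * b q x * d (i + j - p - q) x
      = (ψ x) ^ 2 * (b (i + j) x - (if j = 0 then b i x else 0)
          - (if i = 0 then b j x else 0)) := by
  intro i
  induction i with
  | zero =>
    intro j x
    rw [Finset.sum_range_one]
    have e : ∀ q ∈ range (j + 1), b 0 x * b q x * d (0 + j - 0 - q) x
        = b 0 x * (b q x * d (j - q) x) := by
      intro q hq
      rw [show 0 + j - 0 - q = j - q from by omega]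
      ring
    rw [Finset.sum_congr rfl e, ← Finset.mul_sum, conv j x]
    by_cases hj : j = 0
    · subst hj; simp; ring
    · simp [hj]
  | succ i IHi =>
    intro j x
    have t0 := Finset.sum_range_succ
      (fun p => ∑ q ∈ range (j + 1), b p x * b q x * d (i + 1 + j - p - q) x) (i + 1)
    have hrow : ∑ q ∈ range (j + 1), b (i + 1) x * b q x * d (i + 1 + j - (i + 1) - q) x
        = b (i + 1) x * (if j = 0 then -(ψ x) ^ 2 else 0) := by
      have e : ∀ q ∈ range (j + 1), b (i + 1) x * b q x * d (i + 1 + j - (i + 1) - q) x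
          = b (i + 1) x * (b q x * d (j - q) x) := by
        intro q hq
        rw [show i + 1 + j - (i + 1) - q = j - q from by omega]
        ring
      rw [Finset.sum_congr rfl e, ← Finset.mul_sum, conv j x]
    have hsplit : ∀ p ∈ range (i + 1),
        ∑ q ∈ range (j + 1 + 1), b p x * b q x * d (i + (j + 1) - p - q) x
        = (∑ q ∈ range (j + 1), b p x * b q x * d (i + 1 + j - p - q) x)
          + b p x * (b (j + 1) x * d (i - p) x) := by
      intro p hp
      simp only [mem_range] at hp
      rw [Finset.sum_range_succ]
      congr 1
      · refine Finset.sum_congr rfl fun q hq => ?_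
        rw [show i + (j + 1) - p - q = i + 1 + j - p - q from by omega]
      · rw [show i + (j + 1) - p - (j + 1) = i - p from by omega]
        ring
    have hIH' := IHi (j + 1) x
    rw [Finset.sum_congr rfl hsplit, Finset.sum_add_distrib] at hIH'
    have hcol : ∑ p ∈ range (i + 1), b p x * (b (j + 1) x * d (i - p) x)
        = b (j + 1) x * (if i = 0 then -(ψ x) ^ 2 else 0) := by
      have e : ∀ p ∈ range (i + 1), b p x * (b (j + 1) x * d (i - p) x)
          = b (j + 1) x * (b p x * d (i - p) x) := fun p _ => by ring
      rw [Finset.sum_congr rfl e, ← Finset.mul_sum, conv i x]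
    rw [hcol, show i + (j + 1) = i + 1 + j from by omega] at hIH'
    rw [t0, hrow]
    by_cases hi : i = 0 <;> by_cases hj : j = 0 <;>
      simp only [hi, hj, if_true, if_false, Nat.succ_ne_zero, ite_true, ite_false,
        reduceIte] at hIH' ⊢ <;>
      linear_combination hIH'

open Finset in
private lemma PII_star (ψ : ℂ → ℂ) (b d : ℕ → ℂ → ℂ)
    (hd0 : d 0 = fun x => -ψ x)
    (conv : ∀ n : ℕ, ∀ x : ℂ, ∑ k ∈ range (n + 1), b k x * d (n - k) x
      = if n = 0 then -(ψ x) ^ 2 else 0) :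
    ∀ i j : ℕ, ∀ x : ℂ,
      (ψ x) ^ 2 * b (i + j) x = ψ x * b i x * b j x
        + ∑ m ∈ range i, ∑ l ∈ range j,
            b (i - (m + 1)) x * b (j - (l + 1)) x * d (m + 1 + (l + 1)) x := by
  intro i j x
  have T2 : ∑ m ∈ range (i + 1), ∑ l ∈ range (j + 1), b (i - m) x * b (j - l) x * d (m + l) x
      = (ψ x) ^ 2 * (b (i + j) x - (if j = 0 then b i x else 0)
          - (if i = 0 then b j x else 0)) := by
    have o := Finset.sum_range_reflect
      (fun p => ∑ q ∈ range (j + 1), b p x * b q x * d (i + j - p - q) x) (i + 1)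
    rw [← PII_T ψ b d conv i j x, ← o]
    refine Finset.sum_congr rfl fun m hm => ?_
    simp only [mem_range] at hm
    have inn := Finset.sum_range_reflect
      (fun q => b (i + 1 - 1 - m) x * b q x * d (i + j - (i + 1 - 1 - m) - q) x) (j + 1)
    rw [← inn]
    refine Finset.sum_congr rfl fun l hl => ?_
    simp only [mem_range] at hl
    rw [show i + 1 - 1 - m = i - m from by omega, show j + 1 - 1 - l = j - l from by omega,
      show i + j - (i - m) - (j - l) = m + l from by omega]
  have pm := Finset.sum_range_succ'
    (fun m => ∑ l ∈ range (j + 1), b (i - m) x * b (j - l) x * d (m + l) x) i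
  simp only [Nat.sub_zero, Nat.zero_add] at pm
  have pl : ∀ m ∈ range i,
      ∑ l ∈ range (j + 1), b (i - (m + 1)) x * b (j - l) x * d (m + 1 + l) x
      = (∑ l ∈ range j, b (i - (m + 1)) x * b (j - (l + 1)) x * d (m + 1 + (l + 1)) x)
        + b (i - (m + 1)) x * b j x * d (m + 1) x := by
    intro m hm
    have q := Finset.sum_range_succ'
      (fun l => b (i - (m + 1)) x * b (j - l) x * d (m + 1 + l) x) j
    simp only [Nat.sub_zero, Nat.add_zero] at q
    exact q
  rw [Finset.sum_congr rfl pl, Finset.sum_add_distrib] at pm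
  have hA : ∑ m ∈ range i, b (i - (m + 1)) x * b j x * d (m + 1) x
      = b j x * ((if i = 0 then -(ψ x) ^ 2 else 0) + ψ x * b i x) := by
    have refl2 := Finset.sum_range_reflect
      (fun m => b (i - (m + 1)) x * b j x * d (m + 1) x) i
    have e : ∀ m ∈ range i,
        b (i - (i - 1 - m + 1)) x * b j x * d (i - 1 - m + 1) x
        = b j x * (b m x * d (i - m) x) := by
      intro m hm
      simp only [mem_range] at hm
      rw [show i - (i - 1 - m + 1) = m from by omega, show i - 1 - m + 1 = i - m from by omega]
      ring
    rw [Finset.sum_congr rfl e, ← Finset.mul_sum] at refl2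
    have cv := conv i x
    have pt := Finset.sum_range_succ (fun m => b m x * d (i - m) x) i
    rw [show i - i = 0 from by omega] at pt
    simp only [hd0] at pt
    rw [cv] at pt
    rw [← refl2]
    linear_combination (-(b j x)) * pt
  have hB : ∑ l ∈ range (j + 1), b i x * b (j - l) x * d l x
      = b i x * (if j = 0 then -(ψ x) ^ 2 else 0) := by
    have refl3 := Finset.sum_range_reflect (fun l => b i x * b (j - l) x * d l x) (j + 1)
    have e : ∀ l ∈ range (j + 1),
        b i x * b (j - (j + 1 - 1 - l)) x * d (j + 1 - 1 - l) x
        = b i x * (b l x * d (j - l) x) := by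
      intro l hl
      simp only [mem_range] at hl
      rw [show j - (j + 1 - 1 - l) = l from by omega, show j + 1 - 1 - l = j - l from by omega]
      ring
    rw [Finset.sum_congr rfl e, ← Finset.mul_sum, conv j x] at refl3
    exact refl3.symm
  rw [hA, hB] at pm
  by_cases hi : i = 0 <;> by_cases hj : j = 0 <;>
    simp only [hi, hj, if_true, if_false, ite_true, ite_false, reduceIte] at T2 pm ⊢ <;>
    linear_combination -T2 + pm

open Finset in
private lemma PII_det (ψ : ℂ → ℂ) (b d : ℕ → ℂ → ℂ) (x : ℂ) (hψx : ψ x ≠ 0)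
    (hb0x : b 0 x = ψ x)
    (star : ∀ i j : ℕ, (ψ x) ^ 2 * b (i + j) x = ψ x * b i x * b j x
        + ∑ m ∈ range i, ∑ l ∈ range j,
            b (i - (m + 1)) x * b (j - (l + 1)) x * d (m + 1 + (l + 1)) x)
    (N : ℕ) :
    (Matrix.of fun i j : Fin (N + 1) => b (i.1 + j.1) x).det
      = ψ x * (Matrix.of fun i j : Fin N => d (i.1 + 1 + (j.1 + 1)) x).det := by
  set P : Matrix (Fin (N + 1)) (Fin (N + 1)) ℂ :=
    Matrix.of (fun i j : Fin (N + 1) =>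
      if (j : ℕ) ≤ (i : ℕ) then b (i.1 - j.1) x / ψ x else 0) with hP
  set Δ : Matrix (Fin (N + 1)) (Fin (N + 1)) ℂ :=
    Matrix.of (fun i j : Fin (N + 1) =>
      if (i : ℕ) = 0 then (if (j : ℕ) = 0 then ψ x else 0)
      else if (j : ℕ) = 0 then 0 else d (i.1 + j.1) x) with hΔ
  have hPDelta : ∀ i l : Fin (N + 1), (P * Δ) i l
      = if (l : ℕ) = 0 then b i.1 x
        else (∑ m ∈ range i.1, b (i.1 - (m + 1)) x * d (m + 1 + l.1) x) / ψ x := by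
    intro i l
    rw [Matrix.mul_apply, Fin.sum_univ_succ]
    by_cases hl : (l : ℕ) = 0
    · rw [if_pos hl]
      have h1 : P i 0 * Δ 0 l = b i.1 x := by
        simp only [hP, hΔ, Matrix.of_apply, Fin.val_zero, Nat.zero_le, if_true, Nat.sub_zero]
        rw [if_pos hl, div_mul_cancel₀ _ hψx]
      have h2 : ∀ m : Fin N, P i m.succ * Δ m.succ l = 0 := by
        intro m
        simp only [hP, hΔ, Matrix.of_apply, Fin.val_succ]
        rw [if_neg (by omega : ¬ ((m : ℕ) + 1 = 0)), if_pos hl, mul_zero]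
      rw [Finset.sum_congr rfl (fun m _ => h2 m), Finset.sum_const_zero, add_zero, h1]
    · rw [if_neg hl]
      have h1 : P i 0 * Δ 0 l = 0 := by
        simp only [hP, hΔ, Matrix.of_apply, Fin.val_zero]
        rw [if_pos trivial, if_neg hl, mul_zero]
      have h2 : ∀ m : Fin N, P i m.succ * Δ m.succ l
          = (if m.1 + 1 ≤ i.1 then b (i.1 - (m.1 + 1)) x * d (m.1 + 1 + l.1) x else 0)
              / ψ x := by
        intro m
        simp only [hP, hΔ, Matrix.of_apply, Fin.val_succ]
        rw [if_neg (by omega : ¬ ((m : ℕ) + 1 = 0)), if_neg hl]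
        by_cases hm : m.1 + 1 ≤ i.1
        · rw [if_pos hm, if_pos hm]
          ring
        · rw [if_neg hm, if_neg hm, zero_mul, zero_div]
      rw [h1, zero_add, Finset.sum_congr rfl (fun m _ => h2 m), ← Finset.sum_div]
      congr 1
      rw [Fin.sum_univ_eq_sum_range
        (fun mm => if mm + 1 ≤ i.1 then b (i.1 - (mm + 1)) x * d (mm + 1 + l.1) x else 0) N]
      have hsub : ∑ mm ∈ range i.1,
          (if mm + 1 ≤ i.1 then b (i.1 - (mm + 1)) x * d (mm + 1 + l.1) x else 0)
          = ∑ mm ∈ range N,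
          (if mm + 1 ≤ i.1 then b (i.1 - (mm + 1)) x * d (mm + 1 + l.1) x else 0) := by
        refine Finset.sum_subset (Finset.range_subset_range.2 (by omega)) ?_
        intro mm _ hmm
        simp only [mem_range] at hmm
        exact if_neg (by omega)
      rw [← hsub]
      refine Finset.sum_congr rfl fun mm hmm => ?_
      simp only [mem_range] at hmm
      exact if_pos (by omega)
  have hentry : (Matrix.of fun i j : Fin (N + 1) => b (i.1 + j.1) x) = P * Δ * P.transpose := by
    ext i j
    rw [Matrix.mul_apply]
    simp only [Matrix.transpose_apply, Matrix.of_apply]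
    rw [Fin.sum_univ_succ, hPDelta i 0]
    simp only [Fin.val_zero, eq_self_iff_true, if_true]
    have hPj0 : P j 0 = b j.1 x / ψ x := by
      simp only [hP, Matrix.of_apply, Fin.val_zero]
      simp
    have h3 : ∀ l : Fin N, (P * Δ) i l.succ * P j l.succ
        = (if l.1 + 1 ≤ j.1 then
            (∑ m ∈ range i.1, b (i.1 - (m + 1)) x * d (m + 1 + (l.1 + 1)) x)
              * b (j.1 - (l.1 + 1)) x else 0) / (ψ x * ψ x) := by
      intro l
      rw [hPDelta i l.succ]
      simp only [hP, Matrix.of_apply, Fin.val_succ]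
      rw [if_neg (by omega : ¬ ((l : ℕ) + 1 = 0))]
      by_cases hlj : l.1 + 1 ≤ j.1
      · rw [if_pos hlj, if_pos hlj, div_mul_div_comm]
      · rw [if_neg hlj, if_neg hlj, mul_zero, zero_div]
    rw [Finset.sum_congr rfl (fun l _ => h3 l), ← Finset.sum_div]
    rw [Fin.sum_univ_eq_sum_range
      (fun ll => if ll + 1 ≤ j.1 then
        (∑ m ∈ range i.1, b (i.1 - (m + 1)) x * d (m + 1 + (ll + 1)) x)
          * b (j.1 - (ll + 1)) x else 0) N]
    have hsub : ∑ ll ∈ range j.1,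
        (if ll + 1 ≤ j.1 then
          (∑ m ∈ range i.1, b (i.1 - (m + 1)) x * d (m + 1 + (ll + 1)) x)
            * b (j.1 - (ll + 1)) x else 0)
        = ∑ ll ∈ range N,
        (if ll + 1 ≤ j.1 then
          (∑ m ∈ range i.1, b (i.1 - (m + 1)) x * d (m + 1 + (ll + 1)) x)
            * b (j.1 - (ll + 1)) x else 0) := by
      refine Finset.sum_subset (Finset.range_subset_range.2 (by omega)) ?_
      intro ll _ hll
      simp only [mem_range] at hll
      exact if_neg (by omega)
    rw [← hsub]
    have hif : ∀ ll ∈ range j.1,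
        (if ll + 1 ≤ j.1 then
          (∑ m ∈ range i.1, b (i.1 - (m + 1)) x * d (m + 1 + (ll + 1)) x)
            * b (j.1 - (ll + 1)) x else 0)
        = ∑ m ∈ range i.1,
            b (i.1 - (m + 1)) x * b (j.1 - (ll + 1)) x * d (m + 1 + (ll + 1)) x := by
      intro ll hll
      simp only [mem_range] at hll
      rw [if_pos (by omega), Finset.sum_mul]
      refine Finset.sum_congr rfl fun m _ => ?_
      ring
    rw [Finset.sum_congr rfl hif, Finset.sum_comm, hPj0]
    have hst := star i.1 j.1
    set S := ∑ m ∈ range i.1, ∑ l ∈ range j.1,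
      b (i.1 - (m + 1)) x * b (j.1 - (l + 1)) x * d (m + 1 + (l + 1)) x with hS
    field_simp
    linear_combination hst
  have hdP : P.det = 1 := by
    have ht : P.BlockTriangular OrderDual.toDual := by
      intro u v huv
      have huv' : (u : ℕ) < (v : ℕ) := huv
      simp only [hP, Matrix.of_apply]
      rw [if_neg (by omega)]
    rw [Matrix.det_of_lowerTriangular P ht]
    have hone : ∀ u : Fin (N + 1), P u u = 1 := by
      intro u
      simp only [hP, Matrix.of_apply]
      rw [if_pos (le_refl _), Nat.sub_self, hb0x, div_self hψx]
    rw [Finset.prod_congr rfl (fun u _ => hone u)]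
    exact Finset.prod_const_one
  have hdΔ : Δ.det
      = ψ x * (Matrix.of fun i j : Fin N => d (i.1 + 1 + (j.1 + 1)) x).det := by
    rw [Matrix.det_succ_column_zero, Fin.sum_univ_succ]
    have hz : ∀ i : Fin N,
        (-1 : ℂ) ^ ((i.succ : Fin (N + 1)) : ℕ) * Δ i.succ 0
          * (Δ.submatrix i.succ.succAbove Fin.succ).det = 0 := by
      intro i
      have : Δ i.succ 0 = 0 := by
        simp only [hΔ, Matrix.of_apply, Fin.val_succ, Fin.val_zero]
        rw [if_neg (by omega : ¬ ((i : ℕ) + 1 = 0))]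
        simp
      rw [this, mul_zero, zero_mul]
    rw [Finset.sum_congr rfl (fun i _ => hz i), Finset.sum_const_zero, add_zero]
    have h00 : Δ 0 0 = ψ x := by
      simp only [hΔ, Matrix.of_apply, Fin.val_zero]
      simp
    have hsubm : Δ.submatrix (Fin.succAbove 0) Fin.succ
        = Matrix.of fun i j : Fin N => d (i.1 + 1 + (j.1 + 1)) x := by
      ext u v
      simp only [Matrix.submatrix_apply, Fin.succAbove_zero, hΔ, Matrix.of_apply,
        Fin.val_succ]
      rw [if_neg (by omega : ¬ ((u : ℕ) + 1 = 0)), if_neg (by omega : ¬ ((v : ℕ) + 1 = 0))]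
    rw [h00, hsubm]
    simp
  rw [hentry, Matrix.det_mul, Matrix.det_mul, Matrix.det_transpose, hdP, hdΔ]
  ring



/-- **Proposition 3.4 (negative side).** Under the conditions
`ψ''/ψ = φ''/φ = −2ψφ + 2x` and `φ'ψ − φψ' = 2α`, with `ψ` nowhere vanishing, the
Hankel determinants `κ_{-n-1} = det(d_{i+j})_{1≤i,j≤n}` built from the second formal
Riccati solution coincide, for `n ≤ −1`, with `τ_n/ψ`, where `τ_n` (`n < 0`) are the
Hankel determinants `det(b_{i+j})` of the Painlevé II tau functions normalized by
`τ₀ = 1`, `τ₋₁ = ψ`. -/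
theorem kappa_eq_tau_div_psi
    (α : ℂ) (φ ψ : ℂ → ℂ) (hφ : Differentiable ℂ φ) (hψ : Differentiable ℂ ψ)
    (hψ0 : ∀ x : ℂ, ψ x ≠ 0)
    (hψ'' : ∀ x : ℂ, deriv (deriv ψ) x = (2 * x - 2 * ψ x * φ x) * ψ x)
    (hφ'' : ∀ x : ℂ, deriv (deriv φ) x = (2 * x - 2 * ψ x * φ x) * φ x)
    (hW : ∀ x : ℂ, deriv φ x * ψ x - φ x * deriv ψ x = 2 * α)
    (b : ℕ → ℂ → ℂ)
    (hb0 : b 0 = ψ)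
    (hb : ∀ n : ℕ, b (n + 1) =
      deriv (b n) + fun x => φ x * ∑ k ∈ Finset.range n, b k x * b (n - 1 - k) x)
    (τ : ℤ → ℂ → ℂ)
    (hτ0 : τ 0 = 1)
    (hτneg : ∀ N : ℕ, τ (-((N : ℤ) + 1)) =
      fun x => (Matrix.of fun i j : Fin (N + 1) => b (i.1 + j.1) x).det)
    (hτnz : ∀ m : ℤ, m < 0 → ∀ x : ℂ, τ m x ≠ 0)
    (d : ℕ → ℂ → ℂ)
    (hd0 : d 0 = fun x => -ψ x)
    (hd1 : d 1 = deriv ψ)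
    (hd2 : d 2 = fun x =>
      (deriv (deriv ψ) x * ψ x - (deriv ψ x) ^ 2 + φ x * (ψ x) ^ 3) / ψ x)
    (hd : ∀ n : ℕ, d (n + 3) = deriv (d (n + 2)) + fun x =>
      (1 / ψ x) * ∑ k ∈ Finset.Icc 2 (n + 1), d k x * d (n + 3 - k) x)
    (κ : ℤ → ℂ → ℂ)
    (hκ1 : κ (-1) = 1)
    (hκ : ∀ n : ℕ, 0 < n →
      κ (-(n : ℤ) - 1) = fun x => (Matrix.of fun i j : Fin n => d (i.1 + 1 + (j.1 + 1)) x).det) :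
    ∀ n : ℤ, n ≤ -1 → ∀ x : ℂ, κ n x = τ n x / ψ x := by
  have conv := PII_conv φ ψ hφ hψ hψ0 b d hb0 hb hd0 hd1 hd2 hd
  have star := PII_star ψ b d hd0 conv
  have hdet : ∀ (N : ℕ) (x : ℂ),
      (Matrix.of fun i j : Fin (N + 1) => b (i.1 + j.1) x).det
        = ψ x * (Matrix.of fun i j : Fin N => d (i.1 + 1 + (j.1 + 1)) x).det :=
    fun N x => PII_det ψ b d x (hψ0 x) (by rw [hb0]) (fun i j => star i j x) N
  intro n hn x
  obtain ⟨N, rfl⟩ : ∃ N : ℕ, n = -((N : ℤ) + 1) := ⟨(-n - 1).toNat, by omega⟩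
  cases N with
  | zero =>
    have ht := hτneg 0
    have h1 : -(((0 : ℕ) : ℤ) + 1) = -1 := by norm_num
    rw [h1] at ht
    rw [h1, hκ1, ht]
    have hτx : (fun x => (Matrix.of fun i j : Fin (0 + 1) => b (i.1 + j.1) x).det) x
        = (Matrix.of fun i j : Fin (0 + 1) => b (i.1 + j.1) x).det := rfl
    rw [hτx, hdet 0 x, Matrix.det_fin_zero, Pi.one_apply, mul_one,
      div_self (hψ0 x)]
  | succ M =>
    have hκ' := hκ (M + 1) (Nat.succ_pos M)
    have harg : -(((M + 1 : ℕ)) : ℤ) - 1 = -(((M + 1 : ℕ) : ℤ) + 1) := by ring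
    rw [harg] at hκ'
    have hκx := congrFun hκ' x
    have hτx := congrFun (hτneg (M + 1)) x
    rw [hκx, hτx, hdet (M + 1) x, mul_div_cancel_left₀ _ (hψ0 x)]
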